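/- arXiv:1906.09001 — 2 statements merged into one kernel-verified Lean document; each statement's English description precedes it below -/
import Mathlib

section
/- Let (Ω, 𝔪) be a measure space, let 1 < s < α, let λ > 0, let a : Ω → [0,∞) be measurable with a^{α/(α−s)} integrable, let g : Ω → [0,∞) be integrable, and let u ∈ L^α(Ω) with ∫_Ω |u|^α d𝔪 > 0. If ∫_Ω g d𝔪 + ∫_Ω |u|^α d𝔪 = λ·∫_Ω a|u|^s d𝔪, then ∫_Ω g d𝔪 < ((α−s)/α)·λ^{α/(α−s)}·∫_Ω a^{α/(α−s)} d𝔪. (This is the quantitative core of the non-existence part of Theorem 2: any solution of −div[φ′(|∇u|²)∇u] + |u|^{α−2}u = λ a(x)|u|^{s−2}u forces this bound with g = φ′(|∇u|²)|∇u|², so no solution exists when λ is small.) -/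
open MeasureTheory

/-- Quantitative core of the non-existence part of Theorem 2: if `1 < s < α`,
`λ > 0`, `a ≥ 0` with `a^(α/(α-s))` integrable, `g ≥ 0` integrable, `u ∈ L^α` with
`∫ |u|^α > 0`, and `∫ g + ∫ |u|^α = λ ∫ a |u|^s`, then
`∫ g < ((α-s)/α) λ^(α/(α-s)) ∫ a^(α/(α-s))`. -/
theorem nonexistence_bound
    {Ω : Type*} [MeasurableSpace Ω] (m : Measure Ω)
    (α s lam : ℝ) (hs : 1 < s) (hsα : s < α) (hlam : 0 < lam)
    (a : Ω → ℝ) (ha_meas : Measurable a) (ha_nonneg : ∀ x, 0 ≤ a x)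
    (ha_int : Integrable (fun x => a x ^ (α / (α - s))) m)
    (g : Ω → ℝ) (hg_int : Integrable g m) (hg_nonneg : ∀ x, 0 ≤ g x)
    (u : Ω → ℝ) (hu : MemLp u (ENNReal.ofReal α) m)
    (hu_pos : 0 < ∫ x, |u x| ^ α ∂m)
    (heq : (∫ x, g x ∂m) + ∫ x, |u x| ^ α ∂m = lam * ∫ x, a x * |u x| ^ s ∂m) :
    (∫ x, g x ∂m) <
      (α - s) / α * lam ^ (α / (α - s)) * ∫ x, a x ^ (α / (α - s)) ∂m := by
  have hα0 : (0:ℝ) < α := by linarith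
  have hs0 : (0:ℝ) < s := by linarith
  have hαs : (0:ℝ) < α - s := by linarith
  set p := α / (α - s) with hp
  have hp1 : 1 < p := by
    rw [hp, lt_div_iff₀ hαs]; linarith
  have hpq : Real.HolderConjugate p (α / s) := by
    rw [Real.holderConjugate_iff]
    constructor
    · exact hp1
    · rw [hp]; field_simp; ring
  -- integrability of |u|^α
  have huα : Integrable (fun x => |u x| ^ α) m := by
    have h := hu.integrable_norm_rpow (by simp [ENNReal.ofReal_eq_zero]; linarith)
      ENNReal.ofReal_ne_top
    simpa [ENNReal.toReal_ofReal hα0.le, Real.norm_eq_abs] using h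
  -- pointwise Young inequality
  have hpt : ∀ x, lam * (a x * |u x| ^ s) ≤
      s / α * |u x| ^ α + (α - s) / α * (lam ^ p * a x ^ p) := by
    intro x
    have hy := Real.young_inequality_of_nonneg
      (mul_nonneg hlam.le (ha_nonneg x)) (Real.rpow_nonneg (abs_nonneg (u x)) s) hpq
    have h1 : (lam * a x) ^ p = lam ^ p * a x ^ p :=
      Real.mul_rpow hlam.le (ha_nonneg x)
    have h2 : (|u x| ^ s) ^ (α / s) = |u x| ^ α := by
      rw [← Real.rpow_mul (abs_nonneg (u x))]
      congr 1
      field_simp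
    calc lam * (a x * |u x| ^ s) = (lam * a x) * |u x| ^ s := by ring
      _ ≤ (lam * a x) ^ p / p + (|u x| ^ s) ^ (α / s) / (α / s) := hy
      _ = s / α * |u x| ^ α + (α - s) / α * (lam ^ p * a x ^ p) := by
          rw [h1, h2, hp]
          field_simp
          ring
  -- integrate
  have hint : Integrable (fun x => s / α * |u x| ^ α + (α - s) / α * (lam ^ p * a x ^ p)) m := by
    apply (huα.const_mul _).add
    have : (fun x => (α - s) / α * (lam ^ p * a x ^ p)) =
        fun x => ((α - s) / α * lam ^ p) * a x ^ p := by funext x; ring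
    rw [this]
    exact ha_int.const_mul _
  have hmono : ∫ x, lam * (a x * |u x| ^ s) ∂m ≤
      ∫ x, (s / α * |u x| ^ α + (α - s) / α * (lam ^ p * a x ^ p)) ∂m := by
    refine integral_mono_of_nonneg ?_ hint (Filter.Eventually.of_forall hpt)
    exact Filter.Eventually.of_forall fun x => mul_nonneg hlam.le
      (mul_nonneg (ha_nonneg x) (Real.rpow_nonneg (abs_nonneg _) s))
  have hL : ∫ x, lam * (a x * |u x| ^ s) ∂m = lam * ∫ x, a x * |u x| ^ s ∂m :=
    integral_const_mul lam _
  have hR : ∫ x, (s / α * |u x| ^ α + (α - s) / α * (lam ^ p * a x ^ p)) ∂m =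
      s / α * (∫ x, |u x| ^ α ∂m) + (α - s) / α * lam ^ p * ∫ x, a x ^ p ∂m := by
    have hc2 : Integrable (fun x => (α - s) / α * (lam ^ p * a x ^ p)) m := by
      have : (fun x => (α - s) / α * (lam ^ p * a x ^ p)) =
          fun x => ((α - s) / α * lam ^ p) * a x ^ p := by funext x; ring
      rw [this]; exact ha_int.const_mul _
    rw [integral_add (huα.const_mul _) hc2, integral_const_mul]
    have hc : ∫ x, (α - s) / α * (lam ^ p * a x ^ p) ∂m =
        (α - s) / α * lam ^ p * ∫ x, a x ^ p ∂m := by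
      have h := integral_const_mul ((α - s) / α * lam ^ p) (fun x => a x ^ p) (μ := m)
      simp only [mul_assoc] at h ⊢
      exact h
    rw [hc]
  rw [hL, hR, ← heq] at hmono
  have hkey : (α - s) / α * (∫ x, |u x| ^ α ∂m) > 0 :=
    mul_pos (div_pos hαs hα0) hu_pos
  have hX : s / α * (∫ x, |u x| ^ α ∂m) + (α - s) / α * (∫ x, |u x| ^ α ∂m)
      = ∫ x, |u x| ^ α ∂m := by
    field_simp
    ring
  linarith
end

section
/- Let 1 < p < q and define φ : [0,∞) → ℝ by φ(t) = (2/q)·t^{q/2} for t < 1 and φ(t) = (2/p)·t^{p/2} − 2(q−p)/(pq) for t ≥ 1. Then the map t ↦ φ(t²) (equal to (2/q)|t|^q for |t| < 1 and (2/p)|t|^p − 2(q−p)/(pq) for |t| ≥ 1) is strictly convex on [0,∞); that is, φ satisfies hypothesis (φ5). -/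
open Real Set Filter Topology

/-- The double-phase potential generating the `(p,q)`-Laplace operator. -/
noncomputable def dpPhi (p q t : ℝ) : ℝ :=
  if t < 1 then 2 / q * t ^ (q / 2) else 2 / p * t ^ (p / 2) - 2 * (q - p) / (p * q)

private lemma dp_aux_deriv (C r t : ℝ) (ht : 0 < t) :
    HasDerivAt (fun s : ℝ => C * (s ^ 2) ^ (r / 2)) (C * r * t ^ (r - 1)) t := by
  have h1 : HasDerivAt (fun s : ℝ => s ^ 2) (2 * t) t := by
    simpa using hasDerivAt_pow 2 t
  have h2 := (h1.rpow_const (p := r / 2) (Or.inl (by positivity))).const_mul C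
  refine h2.congr_deriv ?_
  have e1 : ((t ^ 2 : ℝ)) ^ (r / 2 - 1) = t ^ (r - 2) := by
    rw [← Real.rpow_natCast t 2, ← Real.rpow_mul ht.le]
    congr 1; ring
  rw [e1, show (r - 1) = (r - 2) + 1 by ring, Real.rpow_add_one ht.ne']
  ring

/-- For `1 < p < q`, the map `t ↦ φ(t²)` associated with the double-phase
potential is strictly convex on `[0,∞)` (hypothesis (φ5)). -/
theorem dpPhi_satisfies_phi5 (p q : ℝ) (hp : 1 < p) (hpq : p < q) :
    StrictConvexOn ℝ (Set.Ici 0) (fun t : ℝ => dpPhi p q (t ^ 2)) := by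
  have hq : 1 < q := hp.trans hpq
  have hp0 : (0:ℝ) < p := by linarith
  have hq0 : (0:ℝ) < q := by linarith
  set f : ℝ → ℝ := fun t => dpPhi p q (t ^ 2) with hf
  set F : ℝ → ℝ := fun t => 2 / q * (t ^ 2) ^ (q / 2) with hF
  set G : ℝ → ℝ := fun t => 2 / p * (t ^ 2) ^ (p / 2) - 2 * (q - p) / (p * q) with hG
  have hfF : ∀ t : ℝ, t ∈ Ioo (-1:ℝ) 1 → f t = F t := by
    intro t ht
    have h1 : t ^ 2 < 1 := by nlinarith [ht.1, ht.2]
    simp only [hf, hF, dpPhi]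
    rw [if_pos h1]
  have hFG1 : F 1 = G 1 := by
    simp only [hF, hG, one_pow, Real.one_rpow]
    field_simp
    ring
  have hfG : ∀ t : ℝ, 1 ≤ t → f t = G t := by
    intro t ht
    have h2 : ¬ (t ^ 2 < 1) := by nlinarith
    simp only [hf, hG, dpPhi]
    rw [if_neg h2]
  have hf1 : f 1 = F 1 := (hfG 1 le_rfl).trans hFG1.symm
  have hF' : ∀ t : ℝ, 0 < t → HasDerivAt F (2 * t ^ (q - 1)) t := by
    intro t ht
    have := dp_aux_deriv (2 / q) q t ht
    convert this using 2
    field_simp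
  have hG' : ∀ t : ℝ, 0 < t → HasDerivAt G (2 * t ^ (p - 1)) t := by
    intro t ht
    have := (dp_aux_deriv (2 / p) p t ht).sub_const (2 * (q - p) / (p * q))
    refine this.congr_deriv ?_
    field_simp
  have hder : ∀ t : ℝ, 0 < t →
      HasDerivAt f (if t < 1 then 2 * t ^ (q - 1) else 2 * t ^ (p - 1)) t := by
    intro t ht
    rcases lt_trichotomy t 1 with h1 | h1 | h1
    · rw [if_pos h1]
      refine (hF' t ht).congr_of_eventuallyEq ?_
      filter_upwards [Ioo_mem_nhds (by linarith : (-1:ℝ) < t) h1] with s hs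
      exact hfF s hs
    · subst h1
      rw [if_neg (lt_irrefl 1), Real.one_rpow]
      have hleft : HasDerivWithinAt f (2 * 1) (Iic 1) 1 := by
        have hF1 : HasDerivAt F (2 * 1) 1 := by simpa using hF' 1 one_pos
        refine (hF1.hasDerivWithinAt).congr_of_eventuallyEq ?_ hf1
        have hmem : Ioo (-1:ℝ) 2 ∈ 𝓝 (1:ℝ) := Ioo_mem_nhds (by norm_num) (by norm_num)
        filter_upwards [self_mem_nhdsWithin, mem_nhdsWithin_of_mem_nhds hmem] with s hs1 hs2
        rcases eq_or_lt_of_le (mem_Iic.mp hs1) with h | h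
        · subst h; exact hf1
        · exact hfF s ⟨hs2.1, h⟩
      have hright : HasDerivWithinAt f (2 * 1) (Ici 1) 1 := by
        have hG1 : HasDerivAt G (2 * 1) 1 := by simpa using hG' 1 one_pos
        exact (hG1.hasDerivWithinAt).congr (fun y hy => hfG y hy) (hfG 1 le_rfl)
      have := hleft.union hright
      rw [Iic_union_Ici, hasDerivWithinAt_univ] at this
      simpa using this
    · rw [if_neg (by linarith)]
      refine (hG' t ht).congr_of_eventuallyEq ?_
      filter_upwards [Ioi_mem_nhds h1] with s hs
      exact hfG s hs.le
  -- continuity on Ici 0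
  have hcont : ContinuousOn f (Ici 0) := by
    intro t ht
    rcases lt_or_ge t 1 with h1 | h1
    · have : ContinuousAt f t := by
        have hFc : ContinuousAt F t := by
          apply ContinuousAt.mul continuousAt_const
          exact (Real.continuousAt_rpow_const _ _ (Or.inr (by positivity))).comp
            (continuousAt_pow t 2)
        refine hFc.congr ?_
        filter_upwards [Ioo_mem_nhds (by simp at ht; linarith : (-1:ℝ) < t) h1] with s hs
        exact (hfF s hs).symm
      exact this.continuousWithinAt
    · rcases eq_or_lt_of_le h1 with h | h
      · exact ((hder t (by linarith)).continuousAt).continuousWithinAt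
      · have : ContinuousAt f t := ((hder t (by linarith)).continuousAt)
        exact this.continuousWithinAt
  -- strict monotonicity of the derivative on the interior
  refine StrictMonoOn.strictConvexOn_of_deriv (convex_Ici 0) hcont ?_
  rw [interior_Ici]
  intro a ha b hb hab
  rw [(hder a ha).deriv, (hder b hb).deriv]
  have hq1 : (0:ℝ) < q - 1 := by linarith
  have hp1 : (0:ℝ) < p - 1 := by linarith
  rcases lt_or_ge b 1 with hb1 | hb1
  · rw [if_pos (hab.trans hb1), if_pos hb1]
    have := Real.rpow_lt_rpow (le_of_lt ha) hab hq1
    linarith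
  · rw [if_neg (not_lt.mpr hb1)]
    rcases lt_or_ge a 1 with ha1 | ha1
    · rw [if_pos ha1]
      have h2 : a ^ (q - 1) < 1 := Real.rpow_lt_one ha.le ha1 (by linarith)
      have h3 : (1:ℝ) ≤ b ^ (p - 1) := Real.one_le_rpow hb1 (by linarith)
      linarith
    · rw [if_neg (not_lt.mpr ha1)]
      have := Real.rpow_lt_rpow (le_of_lt ha) hab hp1
      linarith
end
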